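/- If R and T are distinct (1,β)-BM relations, then ψ_β(R) and ψ_β(T) are disjoint sets of (1,β+1)-BM relations. -/

import Mathlib

open Set

/-- Signed letters: letter index together with a sign (`true` = positive). -/
abbrev V (n : ℕ) := Fin n × Bool

/-- Formal inversion of a signed letter. -/
def iv {n : ℕ} (x : V n) : V n := (x.1, !x.2)

/-- Oriented squares: tuples (a, b, a', b'). -/
abbrev Tup (α β : ℕ) := V α × V β × V α × V β

/-- The geometric square [aba'b'], as the set of its four representatives. -/
def square {α β : ℕ} (a : V α) (b : V β) (a' : V α) (b' : V β) : Set (Tup α β) :=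
  {(a, b, a', b'), (a', b', a, b), (iv a, iv b', iv a', iv b), (iv a', iv b, iv a, iv b')}

/-- The link of a set of geometric squares: the set of (horizontal, vertical)
edges contributed by the corners of the squares. -/
def link {α β : ℕ} (R : Set (Set (Tup α β))) : Set (V α × V β) :=
  {e | ∃ q ∈ R, ∃ t ∈ q, e = (iv t.1, t.2.1)}

/-- An (α,β)-BM relation: a set of α·β geometric squares whose link is the
complete bipartite graph K_{2α,2β}. -/
def IsBM (α β : ℕ) (R : Set (Set (Tup α β))) : Prop :=
  (∀ q ∈ R, ∃ a b a' b', q = square a b a' b') ∧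
  R.ncard = α * β ∧ link R = Set.univ

/-- Embedding of old vertical letters into the enlarged alphabet. -/
def up {β : ℕ} (b : V β) : V (β + 1) := (b.1.castSucc, b.2)

/-- The new vertical letter b_{β+1}. -/
def bn (β : ℕ) : V (β + 1) := (Fin.last β, true)

/-- Embedding of tuples along `up`. -/
def upT {α β : ℕ} (t : Tup α β) : Tup α (β + 1) :=
  (t.1, up t.2.1, t.2.2.1, up t.2.2.2)

/-- Embedding of a geometric square into the enlarged alphabet. -/
def upSq {α β : ℕ} (q : Set (Tup α β)) : Set (Tup α (β + 1)) := upT '' q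

/-- Embedding of a set of geometric squares into the enlarged alphabet. -/
def upR {α β : ℕ} (R : Set (Set (Tup α β))) : Set (Set (Tup α (β + 1))) := upSq '' R

/-- The generator a₁. -/
def a1 : V 1 := (0, true)

/-- ψ_β^{(1)}: adjoin one of the three squares involving only b_{β+1}. -/
def psi1 (β : ℕ) (R : Set (Set (Tup 1 β))) : Set (Set (Set (Tup 1 (β + 1)))) :=
  (fun s => upR R ∪ {s}) ''
    {square a1 (bn β) (iv a1) (iv (bn β)),
     square a1 (bn β) a1 (iv (bn β)),
     square a1 (bn β) (iv a1) (bn β)}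

/-- ψ_β^{(2)}: replace one square [aba'b'] of R by one of the two pairs
{[a b_{β+1} a' b'], [a b a' b_{β+1}⁻¹]} or {[a b_{β+1}⁻¹ a' b'], [a b a' b_{β+1}]}. -/
def psi2 (β : ℕ) (R : Set (Set (Tup 1 β))) : Set (Set (Set (Tup 1 (β + 1)))) :=
  {U | ∃ a b a' b', square a b a' b' ∈ R ∧
    (U = upR (R \ {square a b a' b'}) ∪
        {square a (bn β) a' (up b'), square a (up b) a' (iv (bn β))} ∨
     U = upR (R \ {square a b a' b'}) ∪
        {square a (iv (bn β)) a' (up b'), square a (up b) a' (bn β)})}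

/-- The map ψ_β. -/
def psi (β : ℕ) (R : Set (Set (Tup 1 β))) : Set (Set (Set (Tup 1 (β + 1)))) :=
  psi1 β R ∪ psi2 β R

-- basic lemmas
@[simp] lemma iv_iv {n : ℕ} (x : V n) : iv (iv x) = x := by simp [iv]
lemma iv_ne {n : ℕ} (x : V n) : iv x ≠ x := by simp [iv, Prod.ext_iff]
lemma up_iv {β : ℕ} (b : V β) : up (iv b) = iv (up b) := by simp [up, iv]
lemma up_inj {β : ℕ} : Function.Injective (up (β := β)) := by
  intro x y h
  simpa [up, Prod.ext_iff, Fin.castSucc_inj] using h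
lemma up_ne_bn {β : ℕ} (b : V β) : up b ≠ bn β := by
  simp [up, bn, Prod.ext_iff]
lemma up_ne_ivbn {β : ℕ} (b : V β) : up b ≠ iv (bn β) := by
  simp [up, bn, iv, Prod.ext_iff]
lemma v1_cases (x a : V 1) : x = a ∨ x = iv a := by
  rcases x with ⟨x1, x2⟩; rcases a with ⟨c1, c2⟩
  have : x1 = c1 := Subsingleton.elim _ _
  subst this
  rcases x2 <;> rcases c2 <;> simp [iv]

-- square symmetries
lemma sq_swap {α β : ℕ} (a : V α) (b : V β) (a' : V α) (b' : V β) :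
    square a b a' b' = square a' b' a b := by
  ext t; simp only [square, mem_insert_iff, mem_singleton_iff]; tauto
lemma sq_inv1 {α β : ℕ} (a : V α) (b : V β) (a' : V α) (b' : V β) :
    square a b a' b' = square (iv a) (iv b') (iv a') (iv b) := by
  ext t; simp only [square, mem_insert_iff, mem_singleton_iff, iv_iv]; tauto
lemma sq_inv2 {α β : ℕ} (a : V α) (b : V β) (a' : V α) (b' : V β) :
    square a b a' b' = square (iv a') (iv b) (iv a) (iv b') := by
  ext t; simp only [square, mem_insert_iff, mem_singleton_iff, iv_iv]; tauto

lemma base_mem {α β : ℕ} (a : V α) (b : V β) (a' : V α) (b' : V β) :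
    (a, b, a', b') ∈ square a b a' b' := by simp [square]

lemma sq_eq_of_mem {α β : ℕ} {a c : V α} {b d : V β} {a' c' : V α} {b' d' : V β}
    (h : (a, b, a', b') ∈ square c d c' d') :
    square a b a' b' = square c d c' d' := by
  simp only [square, mem_insert_iff, mem_singleton_iff, Prod.mk.injEq] at h
  rcases h with ⟨h1,h2,h3,h4⟩|⟨h1,h2,h3,h4⟩|⟨h1,h2,h3,h4⟩|⟨h1,h2,h3,h4⟩ <;>
    subst h1 <;> subst h2 <;> subst h3 <;> subst h4
  · rfl
  · exact sq_swap _ _ _ _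
  · exact (sq_inv1 c d c' d').symm
  · exact (sq_inv2 c d c' d').symm

lemma sq_eq_iff {α β : ℕ} (a c : V α) (b d : V β) (a' c' : V α) (b' d' : V β) :
    square a b a' b' = square c d c' d' ↔ (a, b, a', b') ∈ square c d c' d' :=
  ⟨fun h => h ▸ base_mem a b a' b', sq_eq_of_mem⟩

lemma upT_inj {α β : ℕ} : Function.Injective (upT (α := α) (β := β)) := by
  rintro ⟨x1,x2,x3,x4⟩ ⟨y1,y2,y3,y4⟩ h
  simp only [upT, Prod.mk.injEq] at h
  obtain ⟨h1,h2,h3,h4⟩ := h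
  exact Prod.ext h1 (Prod.ext (up_inj h2) (Prod.ext h3 (up_inj h4)))
lemma upSq_inj {α β : ℕ} : Function.Injective (upSq (α := α) (β := β)) :=
  Set.image_injective.mpr upT_inj
lemma upR_inj {α β : ℕ} : Function.Injective (upR (α := α) (β := β)) :=
  Set.image_injective.mpr upSq_inj

lemma upSq_square {α β : ℕ} (a : V α) (b : V β) (a' : V α) (b' : V β) :
    upSq (square a b a' b') = square a (up b) a' (up b') := by
  simp only [upSq, square, image_insert_eq, image_singleton, upT, up_iv]

/-- A square in the enlarged alphabet "touches" the new letter. -/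
def touch {β : ℕ} (s : Set (Tup 1 (β + 1))) : Prop :=
  ∃ t ∈ s, t.2.1.1 = Fin.last β ∨ t.2.2.2.1 = Fin.last β

lemma not_touch_upSq {β : ℕ} (q : Set (Tup 1 β)) : ¬ touch (upSq q) := by
  rintro ⟨t, ht, h⟩
  obtain ⟨t0, -, rfl⟩ := ht
  rcases h with h | h <;>
    exact absurd h (Fin.castSucc_lt_last _).ne

lemma not_touch_upR {β : ℕ} {R : Set (Set (Tup 1 β))} {s} (hs : s ∈ upR R) : ¬ touch s := by
  obtain ⟨q, -, rfl⟩ := hs; exact not_touch_upSq q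

lemma touch_sq_bn_left {β : ℕ} (a a' : V 1) (b' : V (β+1)) (s : Bool) :
    touch (square a (Fin.last β, s) a' b') :=
  ⟨(a, (Fin.last β, s), a', b'), by simp [square], Or.inl rfl⟩

lemma touch_sq_bn_right {β : ℕ} (a a' : V 1) (b : V (β+1)) (s : Bool) :
    touch (square a b a' (Fin.last β, s)) :=
  ⟨(a, b, a', (Fin.last β, s)), by simp [square], Or.inr rfl⟩

lemma split_O {β : ℕ} {A B U : Set (Set (Tup 1 (β+1)))}
    (hU : U = A ∪ B) (hA : ∀ s ∈ A, ¬ touch s) (hB : ∀ s ∈ B, touch s) :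
    {s ∈ U | ¬ touch s} = A ∧ {s ∈ U | touch s} = B := by
  subst hU
  constructor <;> ext s <;> simp only [mem_setOf_eq, mem_union] <;> constructor
  · rintro ⟨h1 | h1, h2⟩
    · exact h1
    · exact absurd (hB s h1) h2
  · intro h; exact ⟨Or.inl h, hA s h⟩
  · rintro ⟨h1 | h1, h2⟩
    · exact absurd (hA s h1) (not_not.mpr h2)
    · exact h1
  · intro h; exact ⟨Or.inr h, hB s h⟩

-- link lemmas
lemma mem_link {α β : ℕ} {U : Set (Set (Tup α β))} {q t} (hq : q ∈ U) (ht : t ∈ q) :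
    (iv t.1, t.2.1) ∈ link U := ⟨q, hq, t, ht, rfl⟩

lemma link_union {α β : ℕ} (A B : Set (Set (Tup α β))) :
    link (A ∪ B) = link A ∪ link B := by
  ext e; simp only [link, mem_setOf_eq, mem_union]
  constructor
  · rintro ⟨q, hq | hq, h⟩
    exacts [Or.inl ⟨q, hq, h⟩, Or.inr ⟨q, hq, h⟩]
  · rintro (⟨q, hq, h⟩ | ⟨q, hq, h⟩)
    exacts [⟨q, Or.inl hq, h⟩, ⟨q, Or.inr hq, h⟩]

lemma link_upR_mem {α β : ℕ} {R : Set (Set (Tup α β))} {x : V α} {b : V β}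
    (h : (x, b) ∈ link R) : (x, up b) ∈ link (upR R) := by
  obtain ⟨q, hq, t, ht, he⟩ := h
  obtain ⟨rfl, rfl⟩ : x = iv t.1 ∧ b = t.2.1 := by
    simpa [Prod.ext_iff] using he
  have := mem_link (U := upR R) (q := upSq q) (t := upT t) ⟨q, hq, rfl⟩ ⟨t, ht, rfl⟩
  simpa [upT] using this




@[simp] lemma castSucc_ne_last' {β : ℕ} (j : Fin β) : ¬ (Fin.castSucc j = Fin.last β) :=
  (Fin.castSucc_lt_last j).ne
@[simp] lemma last_ne_castSucc' {β : ℕ} (j : Fin β) : ¬ (Fin.last β = Fin.castSucc j) :=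
  (Fin.castSucc_lt_last j).ne'

/-- Normal form for membership in psi2: only the first variant is needed. -/
lemma psi2_iff {β : ℕ} {R : Set (Set (Tup 1 β))} {U} :
    U ∈ psi2 β R ↔ ∃ a b a' b', square a b a' b' ∈ R ∧
      U = upR (R \ {square a b a' b'}) ∪
        {square a (bn β) a' (up b'), square a (up b) a' (iv (bn β))} := by
  constructor
  · rintro ⟨a, b, a', b', hq, h | h⟩
    · exact ⟨a, b, a', b', hq, h⟩
    · refine ⟨iv a', iv b, iv a, iv b', ?_, ?_⟩
      · rwa [← sq_inv2]
      · have e1 : square (iv a') (bn β) (iv a) (up (iv b')) =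
            square a (iv (bn β)) a' (up b') := by
          rw [sq_inv2 (iv a') (bn β) (iv a) (up (iv b'))]
          simp only [iv_iv, ← up_iv]
        have e2 : square (iv a') (up (iv b)) (iv a) (iv (bn β)) =
            square a (up b) a' (bn β) := by
          rw [sq_inv2 (iv a') (up (iv b)) (iv a) (iv (bn β))]
          simp only [iv_iv, ← up_iv]
        rw [← sq_inv2, e1, e2]
        exact h
  · rintro ⟨a, b, a', b', hq, h⟩
    exact ⟨a, b, a', b', hq, Or.inl h⟩

lemma newpair_ne {β : ℕ} (a a' : V 1) (b b' : V β) :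
    square a (bn β) a' (up b') ≠ square a (up b) a' (iv (bn β)) := by
  intro h
  have := h ▸ base_mem a (bn β) a' (up b')
  simp only [square, mem_insert_iff, mem_singleton_iff, Prod.mk.injEq] at this
  rcases this with ⟨h1,h2,h3,h4⟩|⟨h1,h2,h3,h4⟩|⟨h1,h2,h3,h4⟩|⟨h1,h2,h3,h4⟩
  · exact absurd h2.symm (by simp [bn, up, iv, Prod.ext_iff])
  · exact absurd h2 (by simp [bn, up, iv, Prod.ext_iff])
  · exact iv_ne a h1.symm
  · exact absurd h2.symm (by simp [bn, up, iv, Prod.ext_iff])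

/-- Matching of the two new pairs forces the replaced squares to coincide. -/
lemma pair_match {β : ℕ} {a a' c c' : V 1} {b b' d d' : V β}
    (h : ({square a (bn β) a' (up b'), square a (up b) a' (iv (bn β))} :
          Set (Set (Tup 1 (β+1)))) =
         {square c (bn β) c' (up d'), square c (up d) c' (iv (bn β))}) :
    square a b a' b' = square c d c' d' := by
  have hs1 : square a (bn β) a' (up b') = square c (bn β) c' (up d') ∨
      square a (bn β) a' (up b') = square c (up d) c' (iv (bn β)) := by
    have : square a (bn β) a' (up b') ∈
        ({square c (bn β) c' (up d'), square c (up d) c' (iv (bn β))} :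
          Set (Set (Tup 1 (β+1)))) := by
      rw [← h]; simp
    simpa using this
  have hs2 : square a (up b) a' (iv (bn β)) = square c (bn β) c' (up d') ∨
      square a (up b) a' (iv (bn β)) = square c (up d) c' (iv (bn β)) := by
    have : square a (up b) a' (iv (bn β)) ∈
        ({square c (bn β) c' (up d'), square c (up d) c' (iv (bn β))} :
          Set (Set (Tup 1 (β+1)))) := by
      rw [← h]; simp
    simpa using this
  rcases hs1 with h1 | h1
  · -- direct match
    have e1 := (sq_eq_iff _ _ _ _ _ _ _ _).mp h1
    simp only [square, mem_insert_iff, mem_singleton_iff, Prod.mk.injEq] at e1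
    rcases e1 with ⟨ha,hb,ha',hb'⟩|⟨ha,hb,ha',hb'⟩|⟨ha,hb,ha',hb'⟩|⟨ha,hb,ha',hb'⟩
    · -- a=c,a'=c',b'=d'
      have hbb' : b' = d' := up_inj hb'
      subst ha; subst ha'; subst hbb'
      have h2 : square a (up b) a' (iv (bn β)) = square a (up d) a' (iv (bn β)) := by
        rcases hs2 with h2 | h2
        · exact absurd h2.symm (newpair_ne a a' b b')
        · exact h2
      have e2 := (sq_eq_iff _ _ _ _ _ _ _ _).mp h2
      simp only [square, mem_insert_iff, mem_singleton_iff, Prod.mk.injEq] at e2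
      rcases e2 with ⟨g1,g2,g3,g4⟩|⟨g1,g2,g3,g4⟩|⟨g1,g2,g3,g4⟩|⟨g1,g2,g3,g4⟩
      · rw [up_inj g2]
      · exact absurd g2 (by simp [bn, up, iv, Prod.ext_iff])
      · exact absurd g2 (by simp [bn, up, iv, Prod.ext_iff])
      · exact absurd g4 (by simp [bn, up, iv, Prod.ext_iff])
    · exact absurd hb (by simp [bn, up, iv, Prod.ext_iff])
    · exact absurd hb (by simp [bn, up, iv, Prod.ext_iff])
    · exact absurd hb (by simp [bn, up, iv, Prod.ext_iff])
  · -- cross match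
    have e1 := (sq_eq_iff _ _ _ _ _ _ _ _).mp h1
    simp only [square, mem_insert_iff, mem_singleton_iff, Prod.mk.injEq, iv_iv] at e1
    rcases e1 with ⟨ha,hb,ha',hb'⟩|⟨ha,hb,ha',hb'⟩|⟨ha,hb,ha',hb'⟩|⟨ha,hb,ha',hb'⟩
    · exact absurd hb (by simp [bn, up, iv, Prod.ext_iff])
    · exact absurd hb (by simp [bn, up, iv, Prod.ext_iff])
    · -- a = iv c, a' = iv c', b' = iv d
      have hbb' : b' = iv d := up_inj (by rw [hb', up_iv])
      have h2 : square a (up b) a' (iv (bn β)) = square c (bn β) c' (up d') := by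
        rcases hs2 with h2 | h2
        · exact h2
        · exact absurd (h1.trans h2.symm) (newpair_ne a a' b b')
      have e2 := (sq_eq_iff _ _ _ _ _ _ _ _).mp h2
      simp only [square, mem_insert_iff, mem_singleton_iff, Prod.mk.injEq, iv_iv] at e2
      rcases e2 with ⟨g1,g2,g3,g4⟩|⟨g1,g2,g3,g4⟩|⟨g1,g2,g3,g4⟩|⟨g1,g2,g3,g4⟩
      · exact absurd g2 (by simp [bn, up, iv, Prod.ext_iff])
      · exact absurd g4 (by simp [bn, up, iv, Prod.ext_iff])
      · have hbb : b = iv d' := up_inj (by rw [g2, up_iv])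
        subst ha; subst ha'; subst hbb; subst hbb'
        exact (sq_inv1 c d c' d').symm
      · exact absurd g2 (by simp [bn, up, iv, Prod.ext_iff])
    · exact absurd hb' (by simp [bn, up, iv, Prod.ext_iff])

lemma touch_s1 {β : ℕ} (a a' : V 1) (b' : V (β+1)) : touch (square a (bn β) a' b') :=
  touch_sq_bn_left a a' b' true
lemma touch_s2 {β : ℕ} (a a' : V 1) (b : V (β+1)) : touch (square a b a' (iv (bn β))) :=
  touch_sq_bn_right a a' b false

lemma recover_psi1 {β : ℕ} {R : Set (Set (Tup 1 β))} {U} (h : U ∈ psi1 β R) :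
    {x ∈ U | ¬ touch x} = upR R ∧
    ∃ s, touch s ∧ U = upR R ∪ {s} ∧ {x ∈ U | touch x} = {s} ∧
      (s = square a1 (bn β) (iv a1) (iv (bn β)) ∨ s = square a1 (bn β) a1 (iv (bn β)) ∨
       s = square a1 (bn β) (iv a1) (bn β)) := by
  obtain ⟨s, hs, rfl⟩ := h
  simp only [mem_insert_iff, mem_singleton_iff] at hs
  have hts : touch s := by
    rcases hs with rfl | rfl | rfl
    · exact touch_s1 _ _ _
    · exact touch_s1 _ _ _
    · exact touch_s1 _ _ _
  have := split_O (A := upR R) (B := {s}) rfl (fun _ h => not_touch_upR h)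
    (by rintro x hx; rw [mem_singleton_iff] at hx; subst hx; exact hts)
  exact ⟨this.1, s, hts, rfl, this.2, hs⟩

lemma recover_psi2 {β : ℕ} {R : Set (Set (Tup 1 β))} {U} (h : U ∈ psi2 β R) :
    ∃ a b a' b', square a b a' b' ∈ R ∧
      U = upR (R \ {square a b a' b'}) ∪
        {square a (bn β) a' (up b'), square a (up b) a' (iv (bn β))} ∧
      {x ∈ U | ¬ touch x} = upR (R \ {square a b a' b'}) ∧
      {x ∈ U | touch x} =
        {square a (bn β) a' (up b'), square a (up b) a' (iv (bn β))} := by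
  obtain ⟨a, b, a', b', hq, rfl⟩ := psi2_iff.mp h
  have := split_O (A := upR (R \ {square a b a' b'}))
    (B := {square a (bn β) a' (up b'), square a (up b) a' (iv (bn β))}) rfl
    (fun _ h => not_touch_upR h)
    (by rintro x hx
        rcases hx with rfl | hx
        · exact touch_s1 _ _ _
        · rw [mem_singleton_iff] at hx; subst hx; exact touch_s2 _ _ _)
  exact ⟨a, b, a', b', hq, rfl, this.1, this.2⟩

/-- Disjointness core. -/
lemma psi_inter_empty {β : ℕ} {R T : Set (Set (Tup 1 β))} (hne : R ≠ T) :
    psi β R ∩ psi β T = ∅ := by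
  rw [Set.eq_empty_iff_forall_notMem]
  rintro U ⟨hUR, hUT⟩
  apply hne
  rcases hUR with hUR | hUR <;> rcases hUT with hUT | hUT
  · -- psi1 / psi1
    obtain ⟨hO1, -⟩ := recover_psi1 hUR
    obtain ⟨hO2, -⟩ := recover_psi1 hUT
    exact upR_inj (hO1.symm.trans hO2)
  · -- psi1 / psi2
    obtain ⟨-, s, -, -, hN1, -⟩ := recover_psi1 hUR
    obtain ⟨c, d, c', d', -, -, -, hN2⟩ := recover_psi2 hUT
    exfalso
    have h1 : square c (bn β) c' (up d') ∈ ({s} : Set (Set (Tup 1 (β+1)))) := by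
      rw [← hN1, hN2]; simp
    have h2 : square c (up d) c' (iv (bn β)) ∈ ({s} : Set (Set (Tup 1 (β+1)))) := by
      rw [← hN1, hN2]; simp
    rw [mem_singleton_iff] at h1 h2
    exact newpair_ne c c' d d' (h1.trans h2.symm)
  · -- psi2 / psi1
    obtain ⟨-, s, -, -, hN1, -⟩ := recover_psi1 hUT
    obtain ⟨c, d, c', d', -, -, -, hN2⟩ := recover_psi2 hUR
    exfalso
    have h1 : square c (bn β) c' (up d') ∈ ({s} : Set (Set (Tup 1 (β+1)))) := by
      rw [← hN1, hN2]; simp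
    have h2 : square c (up d) c' (iv (bn β)) ∈ ({s} : Set (Set (Tup 1 (β+1)))) := by
      rw [← hN1, hN2]; simp
    rw [mem_singleton_iff] at h1 h2
    exact newpair_ne c c' d d' (h1.trans h2.symm)
  · -- psi2 / psi2
    obtain ⟨a, b, a', b', hqR, -, hO1, hN1⟩ := recover_psi2 hUR
    obtain ⟨c, d, c', d', hqT, -, hO2, hN2⟩ := recover_psi2 hUT
    have hdiff : R \ {square a b a' b'} = T \ {square c d c' d'} :=
      upR_inj (hO1.symm.trans hO2)
    have hqq : square a b a' b' = square c d c' d' :=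
      pair_match (hN1.symm.trans hN2)
    calc R = insert (square a b a' b') (R \ {square a b a' b'}) := by
              rw [Set.insert_diff_singleton, Set.insert_eq_self.mpr hqR]
      _ = insert (square c d c' d') (T \ {square c d c' d'}) := by rw [hdiff, hqq]
      _ = T := by rw [Set.insert_diff_singleton, Set.insert_eq_self.mpr hqT]

lemma link_mono {α β : ℕ} {A B : Set (Set (Tup α β))} (h : A ⊆ B) : link A ⊆ link B := by
  rintro e ⟨q, hq, t, ht, he⟩; exact ⟨q, h hq, t, ht, he⟩

lemma edges {α β : ℕ} {U : Set (Set (Tup α β))} {a a' : V α} {b b' : V β}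
    (hq : square a b a' b' ∈ U) :
    (iv a, b) ∈ link U ∧ (iv a', b') ∈ link U ∧ (a, iv b') ∈ link U ∧
    (a', iv b) ∈ link U := by
  refine ⟨mem_link (t := (a, b, a', b')) hq (by simp [square]), ?_, ?_, ?_⟩
  · exact mem_link (t := (a', b', a, b)) hq (by simp [square])
  · simpa using mem_link (t := (iv a, iv b', iv a', iv b)) hq (by simp [square])
  · simpa using mem_link (t := (iv a', iv b, iv a, iv b')) hq (by simp [square])

lemma bm_finite {β : ℕ} {R : Set (Set (Tup 1 β))} (hR : IsBM 1 β R) : R.Finite := by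
  rcases Nat.eq_zero_or_pos β with h0 | hpos
  · subst h0
    have : R = ∅ := by
      rw [Set.eq_empty_iff_forall_notMem]
      intro q hq
      obtain ⟨a, b, a', b', -⟩ := hR.1 q hq
      exact b.1.elim0
    simp [this]
  · exact Set.finite_of_ncard_ne_zero (by rw [hR.2.1]; omega)

lemma upR_ncard {β : ℕ} (R : Set (Set (Tup 1 β))) : (upR R).ncard = R.ncard :=
  Set.ncard_image_of_injective R upSq_inj

lemma upR_finite {β : ℕ} {R : Set (Set (Tup 1 β))} (h : R.Finite) : (upR R).Finite :=
  h.image _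

/-- Every x : V 1 with vertical letter y having index `last` is covered by the four
bn-edges of a replacement pair. -/
lemma v1_pair (x a : V 1) : x = a ∨ x = iv a := v1_cases x a

lemma isBM_of_psi1 {β : ℕ} {R : Set (Set (Tup 1 β))} (hR : IsBM 1 β R) {U}
    (h : U ∈ psi1 β R) : IsBM 1 (β + 1) U := by
  obtain ⟨-, s, hts, rfl, -, hs⟩ := recover_psi1 h
  have hRfin := bm_finite hR
  refine ⟨?_, ?_, ?_⟩
  · rintro q (⟨q0, hq0, rfl⟩ | hq)
    · obtain ⟨a, b, a', b', rfl⟩ := hR.1 q0 hq0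
      exact ⟨a, up b, a', up b', upSq_square a b a' b'⟩
    · rw [mem_singleton_iff] at hq; subst hq
      rcases hs with rfl | rfl | rfl
      · exact ⟨_, _, _, _, rfl⟩
      · exact ⟨_, _, _, _, rfl⟩
      · exact ⟨_, _, _, _, rfl⟩
  · have hnot : s ∉ upR R := fun hmem => not_touch_upR hmem hts
    rw [Set.union_singleton, Set.ncard_insert_of_notMem hnot (upR_finite hRfin),
      upR_ncard, hR.2.1]
    ring
  · rw [Set.eq_univ_iff_forall]
    rintro ⟨x, y⟩
    by_cases hy : y.1 = Fin.last β
    · -- new edges, all covered by the single new square s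
      have hxy : (x = a1 ∨ x = iv a1) ∧ (y = bn β ∨ y = iv (bn β)) := by
        refine ⟨v1_cases x a1, ?_⟩
        rcases hy2 : y.2 with h2 | h2
        · right; exact Prod.ext hy (by simp [bn, iv, hy2])
        · left; exact Prod.ext hy (by simp [bn, hy2])
      have hsU : s ∈ upR R ∪ {s} := Or.inr rfl
      rcases hs with rfl | rfl | rfl <;>
        obtain ⟨e1, e2, e3, e4⟩ := edges hsU <;>
        simp only [iv_iv] at e1 e2 e3 e4 <;>
        rcases hxy.1 with rfl | rfl <;> rcases hxy.2 with rfl | rfl <;>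
        first
          | exact e1 | exact e2 | exact e3 | exact e4
    · -- old edges
      obtain ⟨j, hj⟩ := Fin.exists_castSucc_eq.mpr hy
      have : (x, (j, y.2)) ∈ link R := by rw [hR.2.2]; trivial
      have hup := link_upR_mem this
      have : up ((j, y.2) : V β) = y := Prod.ext hj rfl
      rw [this] at hup
      exact link_mono subset_union_left hup

lemma isBM_of_psi2 {β : ℕ} {R : Set (Set (Tup 1 β))} (hR : IsBM 1 β R) {U}
    (h : U ∈ psi2 β R) : IsBM 1 (β + 1) U := by
  obtain ⟨a, b, a', b', hq, rfl, -, -⟩ := recover_psi2 h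
  have hRfin := bm_finite hR
  set q : Set (Tup 1 β) := square a b a' b' with hqdef
  set s1 : Set (Tup 1 (β+1)) := square a (bn β) a' (up b') with hs1def
  set s2 : Set (Tup 1 (β+1)) := square a (up b) a' (iv (bn β)) with hs2def
  have hbpos : 1 ≤ β := by
    have : 0 < R.ncard := (Set.ncard_pos hRfin).mpr ⟨q, hq⟩
    rw [hR.2.1] at this; omega
  have hs1U : s1 ∈ upR (R \ {q}) ∪ {s1, s2} := Or.inr (Or.inl rfl)
  have hs2U : s2 ∈ upR (R \ {q}) ∪ {s1, s2} := Or.inr (Or.inr rfl)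
  refine ⟨?_, ?_, ?_⟩
  · rintro p (⟨p0, hp0, rfl⟩ | hp)
    · obtain ⟨c, d, c', d', rfl⟩ := hR.1 p0 hp0.1
      exact ⟨c, up d, c', up d', upSq_square c d c' d'⟩
    · rcases hp with rfl | hp
      · exact ⟨_, _, _, _, rfl⟩
      · rw [mem_singleton_iff] at hp; subst hp
        exact ⟨_, _, _, _, rfl⟩
  · -- cardinality
    have hA : (upR (R \ {q})).ncard = β - 1 := by
      rw [upR_ncard, Set.ncard_diff_singleton_of_mem hq, hR.2.1]
      ring_nf
    have hAfin : (upR (R \ {q})).Finite := upR_finite (hRfin.diff)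
    have hs1A : s1 ∉ upR (R \ {q}) := fun hm => not_touch_upR hm (touch_s1 _ _ _)
    have hs2A : s2 ∉ upR (R \ {q}) := fun hm => not_touch_upR hm (touch_s2 _ _ _)
    have h12 : s1 ≠ s2 := newpair_ne a a' b b'
    have : upR (R \ {q}) ∪ {s1, s2} = insert s1 (insert s2 (upR (R \ {q}))) := by
      ext z; simp only [mem_union, mem_insert_iff, mem_singleton_iff]; tauto
    rw [this, Set.ncard_insert_of_notMem (by simp [hs1A, h12])
        ((hAfin.insert s2)),
      Set.ncard_insert_of_notMem hs2A hAfin, hA]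
    omega
  · -- link
    rw [Set.eq_univ_iff_forall]
    rintro ⟨x, y⟩
    obtain ⟨f1, f2, f3, f4⟩ := edges hs1U
    obtain ⟨g1, g2, g3, g4⟩ := edges hs2U
    simp only [iv_iv] at f1 f2 f3 f4 g1 g2 g3 g4
    by_cases hy : y.1 = Fin.last β
    · have hy' : y = bn β ∨ y = iv (bn β) := by
        rcases hy2 : y.2
        · right; exact Prod.ext hy (by simp [bn, iv, hy2])
        · left; exact Prod.ext hy (by simp [bn, hy2])
      rcases hy' with rfl | rfl
      · rcases v1_cases x (iv a) with rfl | rfl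
        · exact f1
        · simpa using g3
      · rcases v1_cases x a' with rfl | rfl
        · exact f4
        · exact g2
    · obtain ⟨j, hj⟩ := Fin.exists_castSucc_eq.mpr hy
      have hupy : up ((j, y.2) : V β) = y := Prod.ext hj rfl
      have hmem : (x, ((j, y.2) : V β)) ∈ link R := by rw [hR.2.2]; trivial
      obtain ⟨p, hp, t, ht, he⟩ := hmem
      by_cases hpq : p = q
      · subst hpq
        have ht4 : t = (a, b, a', b') ∨ t = (a', b', a, b) ∨
            t = (iv a, iv b', iv a', iv b) ∨ t = (iv a', iv b, iv a, iv b') := by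
          simpa [hqdef, square] using ht
        rcases ht4 with rfl | rfl | rfl | rfl
        · obtain ⟨hx, hb⟩ : x = iv a ∧ ((j, y.2) : V β) = b := by
            simpa [Prod.ext_iff, iv, up] using he
          rw [hx, ← hupy, hb]; exact g1
        · obtain ⟨hx, hb⟩ : x = iv a' ∧ ((j, y.2) : V β) = b' := by
            simpa [Prod.ext_iff, iv, up] using he
          rw [hx, ← hupy, hb]; exact f2
        · obtain ⟨hx, hb⟩ : x = a ∧ ((j, y.2) : V β) = iv b' := by
            simpa [Prod.ext_iff, iv, up] using he
          rw [hx, ← hupy, hb, up_iv]; exact f3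
        · obtain ⟨hx, hb⟩ : x = a' ∧ ((j, y.2) : V β) = iv b := by
            simpa [Prod.ext_iff, iv, up] using he
          rw [hx, ← hupy, hb, up_iv]; exact g4
      · have h5 : (x, ((j, y.2) : V β)) ∈ link (R \ {q}) := ⟨p, ⟨hp, hpq⟩, t, ht, he⟩
        have h6 := link_upR_mem h5
        rw [hupy] at h6
        exact link_mono subset_union_left h6


/-- Distinct (1,β)-BM relations give disjoint families ψ_β(R), ψ_β(T) of
(1,β+1)-BM relations. -/
theorem psi_disjoint {β : ℕ} (R T : Set (Set (Tup 1 β)))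
    (hR : IsBM 1 β R) (hT : IsBM 1 β T) (hne : R ≠ T) :
    psi β R ∩ psi β T = ∅ ∧
    (∀ U ∈ psi β R ∪ psi β T, IsBM 1 (β + 1) U) := by

  refine ⟨psi_inter_empty hne, ?_⟩
  rintro U (h | h) <;> rcases h with h | h
  · exact isBM_of_psi1 hR h
  · exact isBM_of_psi2 hR h
  · exact isBM_of_psi1 hT h
  · exact isBM_of_psi2 hT h
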